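/- If the low-bits condition holds, the signature verifies: let w = Ay (a vector of integers componentwise), e = -c·s₂ componentwise, and suppose for every coordinate j, |LowBits(w_j, 2γ₂) + e_j| < γ₂ where LowBits(w_j, 2γ₂) is the remainder r_j with -γ₂ < r_j ≤ γ₂. Then HighBits(w_j, 2γ₂) = HighBits(w_j + e_j, 2γ₂) for every coordinate j. -/
import Mathlib


/-- Componentwise HighBits stability (Equation (1) of the paper): with
`w j = q j · 2γ₂ + r j` and `w j + e j = q' j · 2γ₂ + r' j` the canonical
decompositions (`LowBits ∈ (-γ₂, γ₂]`), if `|r j + e j| < γ₂` for every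
coordinate `j`, then the high bits agree: `q = q'`. -/
theorem highBits_eq_of_lowBits_small {m : ℕ} (w e q r q' r' : Fin m → ℤ)
    (γ₂ : ℤ) (hγ : 0 < γ₂)
    (hw : ∀ j, w j = q j * (2 * γ₂) + r j)
    (hr₁ : ∀ j, -γ₂ < r j) (hr₂ : ∀ j, r j ≤ γ₂)
    (hw' : ∀ j, w j + e j = q' j * (2 * γ₂) + r' j)
    (hr'₁ : ∀ j, -γ₂ < r' j) (hr'₂ : ∀ j, r' j ≤ γ₂)
    (hsmall : ∀ j, |r j + e j| < γ₂) :
    q = q' := by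
  funext j
  have h1 := hw j
  have h2 := hw' j
  have h3 := hr'₁ j
  have h4 := hr'₂ j
  obtain ⟨h5, h6⟩ := abs_lt.mp (hsmall j)
  have key : (q j - q' j) * (2 * γ₂) = r' j - (r j + e j) := by linarith
  have hdvd : (2 * γ₂) ∣ (r' j - (r j + e j)) := ⟨q j - q' j, by linarith⟩
  have hz : r' j - (r j + e j) = 0 := by
    refine Int.eq_zero_of_abs_lt_dvd hdvd ?_
    rw [abs_lt]
    constructor <;> linarith
  have : (q j - q' j) * (2 * γ₂) = 0 := by rw [key, hz]
  have := mul_eq_zero.mp this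
  rcases this with h | h
  · linarith
  · linarith
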